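/- A 2-player symmetric game with pure strategy set S and payoff u is extended transitive if and only if there exists a bounded function Φ: S → ℝ and a continuous, strictly increasing function φ: [0,∞) → [0,∞) with φ(0) = 0 such that Φ(y) − Φ(x) ≥ φ(u(y,x) − u(x,x)) for all pairs (x,y) with u(y,x) − u(x,x) > 0. -/
import Mathlib


/-- Reformulation of extended transitivity: a 2-player symmetric game u is
extended transitive iff there exist a bounded Φ : S → ℝ and a continuous,
strictly increasing φ : [0,∞) → [0,∞) with φ(0) = 0 such that
Φ(y) − Φ(x) ≥ φ(u(y,x) − u(x,x)) whenever u(y,x) − u(x,x) > 0. -/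
theorem stmt_10 {S : Type*} [Nonempty S] (u : S → S → ℝ) :
    (∃ Φ : S → ℝ, (∃ M : ℝ, ∀ x, |Φ x| ≤ M) ∧
        ∀ ε : ℝ, 0 < ε → ∃ δ : ℝ, 0 < δ ∧
          ∀ x y : S, u y x - u x x > ε → Φ y - Φ x > δ) ↔
      (∃ (Φ : S → ℝ) (φ : ℝ → ℝ), (∃ M : ℝ, ∀ x, |Φ x| ≤ M) ∧
        ContinuousOn φ (Set.Ici 0) ∧ StrictMonoOn φ (Set.Ici 0) ∧
        φ 0 = 0 ∧ (∀ t : ℝ, 0 ≤ t → 0 ≤ φ t) ∧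
        ∀ x y : S, u y x - u x x > 0 → Φ y - Φ x ≥ φ (u y x - u x x)) := by
  constructor
  · rintro ⟨Φ, hM, h⟩
    have h0 : ∀ x y : S, 0 < u y x - u x x → 0 < Φ y - Φ x := by
      intro x y hg
      obtain ⟨δ, hδ, hb⟩ := h ((u y x - u x x) / 2) (by linarith)
      have := hb x y (by linarith)
      linarith
    set A : ℝ → Set ℝ := fun t =>
      insert t {d | ∃ x y : S, 0 < u y x - u x x ∧
        d = (Φ y - Φ x) + max (t - (u y x - u x x)) 0} with hA
    have hAne : ∀ t, (A t).Nonempty := fun t => ⟨t, Set.mem_insert _ _⟩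
    have hAlb : ∀ t, 0 ≤ t → ∀ d ∈ A t, 0 ≤ d := by
      intro t ht d hd
      rcases hd with rfl | ⟨x, y, hg, rfl⟩
      · exact ht
      · linarith [le_max_right (t - (u y x - u x x)) (0:ℝ), h0 x y hg]
    have hbdd : ∀ t, 0 ≤ t → BddBelow (A t) := fun t ht => ⟨0, fun d hd => hAlb t ht d hd⟩
    set ψ : ℝ → ℝ := fun t => sInf (A t) with hψ
    have hψ_nonneg : ∀ t, 0 ≤ t → 0 ≤ ψ t := fun t ht =>
      le_csInf (hAne t) (hAlb t ht)
    have hψ_le_self : ∀ t, 0 ≤ t → ψ t ≤ t := fun t ht =>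
      csInf_le (hbdd t ht) (Set.mem_insert _ _)
    have hψ_mono : ∀ s t, 0 ≤ s → s ≤ t → ψ s ≤ ψ t := by
      intro s t hs hst
      refine le_csInf (hAne t) ?_
      rintro b (rfl | ⟨x, y, hg, rfl⟩)
      · exact (hψ_le_self s hs).trans hst
      · refine le_trans (csInf_le (hbdd s hs) (Or.inr ⟨x, y, hg, rfl⟩)) ?_
        have : max (s - (u y x - u x x)) 0 ≤ max (t - (u y x - u x x)) 0 :=
          max_le_max (by linarith) le_rfl
        linarith
    have hψ_lip : ∀ s t, 0 ≤ s → s ≤ t → ψ t ≤ ψ s + (t - s) := by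
      intro s t hs hst
      have ht : 0 ≤ t := le_trans hs hst
      have key : ψ t - (t - s) ≤ ψ s := by
        refine le_csInf (hAne s) ?_
        rintro b (rfl | ⟨x, y, hg, rfl⟩)
        · have := hψ_le_self t ht
          linarith
        · have hmem : (Φ y - Φ x) + max (t - (u y x - u x x)) 0 ∈ A t :=
            Or.inr ⟨x, y, hg, rfl⟩
          have h1 := csInf_le (hbdd t ht) hmem
          have h2 : max (t - (u y x - u x x)) 0 ≤
              max (s - (u y x - u x x)) 0 + (t - s) := by
            apply max_le
            · have := le_max_left (s - (u y x - u x x)) (0:ℝ)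
              linarith
            · have := le_max_right (s - (u y x - u x x)) (0:ℝ)
              linarith
          linarith
      linarith
    have hψ_pos : ∀ t, 0 < t → 0 < ψ t := by
      intro t ht
      obtain ⟨δ, hδ, hb⟩ := h (t / 4) (by linarith)
      have hlo : min (t / 2) δ ≤ ψ t := by
        refine le_csInf (hAne t) ?_
        rintro b (rfl | ⟨x, y, hg, rfl⟩)
        · exact le_trans (min_le_left _ _) (by linarith)
        · rcases le_or_gt (t / 2) (u y x - u x x) with hc | hc
          · have h1 := hb x y (by linarith)
            have h2 := le_max_right (t - (u y x - u x x)) (0:ℝ)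
            have h3 := min_le_right (t / 2) δ
            linarith
          · have h1 : t / 2 ≤ max (t - (u y x - u x x)) 0 :=
              le_trans (by linarith) (le_max_left _ _)
            have h2 := h0 x y hg
            have h3 := min_le_left (t / 2) δ
            linarith
      have hpos : 0 < min (t / 2) δ := lt_min (by linarith) hδ
      linarith
    have hψ_cont : ContinuousOn ψ (Set.Ici 0) := by
      have key : ∀ a b : ℝ, 0 ≤ a → a ≤ b → |ψ a - ψ b| ≤ |a - b| := by
        intro a b ha hab
        have h1 := hψ_mono a b ha hab
        have h2 := hψ_lip a b ha hab
        rw [abs_of_nonpos (by linarith), abs_of_nonpos (by linarith)]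
        linarith
      apply LipschitzOnWith.continuousOn (K := 1)
      rw [lipschitzOnWith_iff_dist_le_mul]
      intro a ha b hb
      have ha' := Set.mem_Ici.mp ha
      have hb' := Set.mem_Ici.mp hb
      rcases le_total a b with hab | hab
      · simpa [Real.dist_eq] using key a b ha' hab
      · rw [dist_comm a b, dist_comm (ψ a) (ψ b)]
        simpa [Real.dist_eq] using key b a hb' hab
    refine ⟨Φ, fun t => ψ t * (t / (t + 1)), hM, ?_, ?_, ?_, ?_, ?_⟩
    · have hfrac : ContinuousOn (fun t : ℝ => t / (t + 1)) (Set.Ici 0) := by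
        apply ContinuousOn.div continuousOn_id
          (continuousOn_id.add continuousOn_const)
        intro t ht
        have := Set.mem_Ici.mp ht
        have : (0:ℝ) < t + 1 := by linarith
        exact this.ne'
      exact hψ_cont.mul hfrac
    · intro a ha b hb hab
      have ha' := Set.mem_Ici.mp ha
      have hb' := Set.mem_Ici.mp hb
      have hψb : 0 < ψ b := hψ_pos b (by linarith)
      have hfrac : a / (a + 1) < b / (b + 1) := by
        rw [div_lt_div_iff₀ (by linarith) (by linarith)]
        nlinarith
      calc ψ a * (a / (a + 1)) ≤ ψ b * (a / (a + 1)) :=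
            mul_le_mul_of_nonneg_right (hψ_mono a b ha' hab.le)
              (div_nonneg ha' (by linarith))
        _ < ψ b * (b / (b + 1)) := mul_lt_mul_of_pos_left hfrac hψb
    · simp
    · intro t ht
      exact mul_nonneg (hψ_nonneg t ht) (div_nonneg ht (by linarith))
    · intro x y hg
      have hg' : (0:ℝ) ≤ u y x - u x x := hg.le
      have h1 : ψ (u y x - u x x) ≤ Φ y - Φ x := by
        have hmem : Φ y - Φ x ∈ A (u y x - u x x) :=
          Or.inr ⟨x, y, hg, by simp⟩
        exact csInf_le (hbdd _ hg') hmem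
      have h2 : (u y x - u x x) / (u y x - u x x + 1) ≤ 1 := by
        rw [div_le_one (by linarith)]; linarith
      have h3 := hψ_nonneg _ hg'
      have h4 := mul_le_mul_of_nonneg_left h2 h3
      rw [mul_one] at h4
      linarith
  · rintro ⟨Φ, φ, hM, _, hsm, hφ0, _, hineq⟩
    refine ⟨Φ, hM, fun ε hε => ⟨φ (ε / 2), ?_, ?_⟩⟩
    · have := hsm Set.self_mem_Ici (Set.mem_Ici.mpr (by linarith : (0:ℝ) ≤ ε / 2))
        (by linarith)
      rw [hφ0] at this
      linarith
    · intro x y hxy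
      have h1 := hineq x y (by linarith)
      have h2 : φ (ε / 2) < φ (u y x - u x x) :=
        hsm (Set.mem_Ici.mpr (by linarith)) (Set.mem_Ici.mpr (by linarith))
          (by linarith)
      linarith
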